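/- arXiv:2104.01382 — 2 statements merged into one kernel-verified Lean document; each statement's English description precedes it below -/
import Mathlib

section
/- If a graph contains no cycle of even length, then every block of the graph is either an odd cycle, a single edge, or an isolated vertex. -/
open SimpleGraph

namespace BlockAux

variable {V : Type*} {G : SimpleGraph V}

lemma length_eq_one_of_edge_mem {y z : V} {p : G.Walk y z} (hp : p.IsPath)
    (he : s(y, z) ∈ p.edges) : p.length = 1 := by
  cases p with
  | nil => simp at he
  | @cons _ b _ h q =>
    rw [Walk.edges_cons, List.mem_cons] at he
    rcases he with he | he
    · have hzb : z = b := Sym2.congr_right.mp he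
      subst hzb
      rw [Walk.cons_isPath_iff] at hp
      have : q = Walk.nil := Walk.isPath_iff_eq_nil.mp hp.1
      simp [this]
    · have hy : y ∈ q.support := Walk.fst_mem_support_of_mem_edges q he
      rw [Walk.cons_isPath_iff] at hp
      exact (hp.2 hy).elim

lemma edge_mem_of_length_one : ∀ {y z : V} (p : G.Walk y z), p.length = 1 → s(y, z) ∈ p.edges
  | _, _, Walk.nil, h => by simp at h
  | _, _, Walk.cons a Walk.nil, _ => by simp
  | _, _, Walk.cons a (Walk.cons b q), h => by simp [Walk.length_cons] at h

lemma cycle_of_two_paths {y z : V} {p q : G.Walk y z}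
    (hp : p.IsPath) (hq : q.IsPath) (hyz : y ≠ z)
    (hlen : 3 ≤ p.length + q.length)
    (hdisj : ∀ x, x ∈ p.support → x ∈ q.support → x = y ∨ x = z) :
    (p.append q.reverse).IsCycle := by
  have hedges : ∀ e, e ∈ p.edges → e ∈ q.edges → False := by
    intro e
    induction e using Sym2.ind with
    | _ a b =>
      intro hep heq
      have hadj : G.Adj a b := p.edges_subset_edgeSet hep
      have hap : a ∈ p.support := Walk.fst_mem_support_of_mem_edges p hep
      have hbp : b ∈ p.support := Walk.snd_mem_support_of_mem_edges p hep
      have haq : a ∈ q.support := Walk.fst_mem_support_of_mem_edges q heq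
      have hbq : b ∈ q.support := Walk.snd_mem_support_of_mem_edges q heq
      rcases hdisj a hap haq with rfl | rfl <;> rcases hdisj b hbp hbq with rfl | rfl
      · exact hadj.ne rfl
      · have h1 := length_eq_one_of_edge_mem hp hep
        have h2 := length_eq_one_of_edge_mem hq heq
        omega
      · rw [Sym2.eq_swap] at hep heq
        have h1 := length_eq_one_of_edge_mem hp hep
        have h2 := length_eq_one_of_edge_mem hq heq
        omega
      · exact hadj.ne rfl
  have hpy : y ∉ p.support.tail := by
    have := hp.support_nodup
    rw [p.support_eq_cons, List.nodup_cons] at this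
    exact this.1
  have hqz : z ∉ q.reverse.support.tail := by
    have := hq.reverse.support_nodup
    rw [q.reverse.support_eq_cons, List.nodup_cons] at this
    exact this.1
  refine ⟨⟨⟨?_⟩, ?_⟩, ?_⟩
  · -- edges nodup
    rw [Walk.edges_append, Walk.edges_reverse, List.nodup_append]
    refine ⟨hp.isTrail.edges_nodup, List.nodup_reverse.mpr hq.isTrail.edges_nodup, ?_⟩
    intro e he1 e' he2 hee
    subst hee
    exact hedges e he1 (List.mem_reverse.mp he2)
  · -- ≠ nil
    intro h
    have := congrArg Walk.length h
    rw [Walk.length_append, Walk.length_reverse] at this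
    simp only [Walk.length_nil] at this
    omega
  · -- support tail nodup
    rw [Walk.tail_support_append, List.nodup_append]
    have hnp : p.support.tail.Nodup := by
      have := hp.support_nodup
      rw [p.support_eq_cons, List.nodup_cons] at this
      exact this.2
    have hnq : q.reverse.support.tail.Nodup := by
      have := hq.reverse.support_nodup
      rw [q.reverse.support_eq_cons, List.nodup_cons] at this
      exact this.2
    refine ⟨hnp, hnq, ?_⟩
    intro x hx1 x' hx2 hxx
    subst hxx
    have hxp : x ∈ p.support := List.mem_of_mem_tail hx1
    have hxq : x ∈ q.support := by
      have : x ∈ q.reverse.support := List.mem_of_mem_tail hx2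
      rwa [Walk.support_reverse, List.mem_reverse] at this
    rcases hdisj x hxp hxq with rfl | rfl
    · exact hpy hx1
    · exact hqz hx2

lemma end_mem_support_tail {u : V} (c : G.Walk u u) (h : c ≠ Walk.nil) : u ∈ c.support.tail := by
  cases c with
  | nil => exact absurd rfl h
  | cons h' q => simpa using q.end_mem_support

lemma mem_support_rotate_iff [DecidableEq V] {u y x : V} (c : G.Walk u u) (hne : c ≠ Walk.nil)
    (hy : y ∈ c.support) : x ∈ (c.rotate y hy).support ↔ x ∈ c.support := by
  constructor
  · intro hx
    rw [(c.rotate y hy).support_eq_cons, List.mem_cons] at hx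
    rcases hx with rfl | hx
    · exact hy
    · exact List.mem_of_mem_tail ((Walk.support_rotate c y hy).mem_iff.mp hx)
  · intro hx
    rw [(c.rotate y hy).support_eq_cons, List.mem_cons]
    by_cases hxy : x = y
    · exact Or.inl hxy
    · right
      rw [(Walk.support_rotate c y hy).mem_iff]
      rw [c.support_eq_cons, List.mem_cons] at hx
      rcases hx with rfl | hx
      · exact end_mem_support_tail c hne
      · exact hx

lemma split_cycle [DecidableEq V] {w y z : V} {c : G.Walk w w} (hc : c.IsCycle)
    (hy : y ∈ c.support) (hz : z ∈ c.support) (hyz : y ≠ z) :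
    ∃ (p : G.Walk y z) (q : G.Walk z y), p.IsPath ∧ q.IsPath ∧
      p.length + q.length = c.length ∧
      (∀ x ∈ p.support, x ∈ c.support) ∧ (∀ x ∈ q.support, x ∈ c.support) ∧
      (∀ x, x ∈ p.support → x ∈ q.support → x = y ∨ x = z) ∧
      (∀ e ∈ p.edges, e ∈ c.edges) ∧ (∀ e ∈ q.edges, e ∈ c.edges) := by
  have hcne : c ≠ Walk.nil := hc.ne_nil
  have hc' : (c.rotate y hy).IsCycle := hc.rotate hy
  have hzmem : z ∈ (c.rotate y hy).support := (mem_support_rotate_iff c hcne hy).mpr hz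
  set c' := c.rotate y hy with hc'def
  set p := c'.takeUntil z hzmem with hpdef
  set q := c'.dropUntil z hzmem with hqdef
  have hspec : p.append q = c' := c'.take_spec hzmem
  have hlenc' : c'.length = c.length := by
    calc c'.length = c'.darts.length := (Walk.length_darts _).symm
      _ = c.darts.length := (c.rotate_darts y hy).perm.length_eq
      _ = c.length := Walk.length_darts _
  have hlen : p.length + q.length = c.length := by
    have h1 := congrArg Walk.length hspec
    rw [Walk.length_append] at h1
    omega
  have htl : c'.support.tail = p.support.tail ++ q.support.tail := by
    rw [← hspec]
    exact Walk.tail_support_append p q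
  have hnod := hc'.support_nodup
  rw [htl, List.nodup_append] at hnod
  obtain ⟨hnp, hnq, hdisjt⟩ := hnod
  have hzp : z ∈ p.support.tail := by
    have h := p.end_mem_support
    rw [p.support_eq_cons, List.mem_cons] at h
    rcases h with h | h
    · exact absurd h.symm hyz
    · exact h
  have hyq : y ∈ q.support.tail := by
    have h := q.end_mem_support
    rw [q.support_eq_cons, List.mem_cons] at h
    rcases h with h | h
    · exact absurd h hyz
    · exact h
  have hynp : y ∉ p.support.tail := fun h => hdisjt y h y hyq rfl
  have hznq : z ∉ q.support.tail := fun h => hdisjt z hzp z h rfl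
  have hppath : p.IsPath := Walk.IsPath.mk' (by
    rw [p.support_eq_cons]; exact List.nodup_cons.mpr ⟨hynp, hnp⟩)
  have hqpath : q.IsPath := Walk.IsPath.mk' (by
    rw [q.support_eq_cons]; exact List.nodup_cons.mpr ⟨hznq, hnq⟩)
  refine ⟨p, q, hppath, hqpath, hlen, ?_, ?_, ?_, ?_, ?_⟩
  · intro x hx
    exact (mem_support_rotate_iff c hcne hy).mp (Walk.support_takeUntil_subset c' hzmem hx)
  · intro x hx
    exact (mem_support_rotate_iff c hcne hy).mp (Walk.support_dropUntil_subset c' hzmem hx)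
  · intro x hxp hxq
    rw [p.support_eq_cons, List.mem_cons] at hxp
    rw [q.support_eq_cons, List.mem_cons] at hxq
    rcases hxp with rfl | hxp
    · exact Or.inl rfl
    · rcases hxq with rfl | hxq
      · exact Or.inr rfl
      · exact (hdisjt x hxp x hxq rfl).elim
  · intro e he
    exact (c.rotate_edges y hy).mem_iff.mp (Walk.edges_takeUntil_subset c' hzmem he)
  · intro e he
    exact (c.rotate_edges y hy).mem_iff.mp (Walk.edges_dropUntil_subset c' hzmem he)

lemma exists_path_until [DecidableEq V] {S : Set V} {x w : V} (W : G.Walk x w) :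
    x ∉ S → w ∈ S →
    ∃ (y : V) (P : G.Walk x y), y ∈ S ∧ P.IsPath ∧ (∀ z ∈ P.support, z ∈ W.support) ∧
      (∀ z ∈ P.support, z ∈ S → z = y) := by
  induction W with
  | nil => intro hx hw; exact absurd hw hx
  | @cons u v w h W' ih =>
    intro hx hw
    by_cases hv : v ∈ S
    · refine ⟨v, Walk.cons h Walk.nil, hv, ?_, ?_, ?_⟩
      · rw [Walk.cons_isPath_iff]
        exact ⟨Walk.IsPath.nil, by simp [h.ne]⟩
      · intro t ht
        simp only [Walk.support_cons, Walk.support_nil, List.mem_cons, List.not_mem_nil,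
          or_false] at ht ⊢
        rcases ht with rfl | rfl
        · exact Or.inl rfl
        · exact Or.inr W'.start_mem_support
      · intro t ht htS
        simp only [Walk.support_cons, Walk.support_nil, List.mem_cons, List.not_mem_nil,
          or_false] at ht
        rcases ht with rfl | rfl
        · exact absurd htS hx
        · rfl
    · obtain ⟨y, P', hyS, hP', hsub, hcond⟩ := ih hv hw
      refine ⟨y, (Walk.cons h P').bypass, hyS, Walk.bypass_isPath _, ?_, ?_⟩
      · intro t ht
        have ht' := Walk.support_bypass_subset _ ht
        rw [Walk.support_cons, List.mem_cons] at ht' ⊢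
        rcases ht' with rfl | ht'
        · exact Or.inl rfl
        · exact Or.inr (hsub t ht')
      · intro t ht htS
        have ht' := Walk.support_bypass_subset _ ht
        rw [Walk.support_cons, List.mem_cons] at ht'
        rcases ht' with rfl | ht'
        · exact absurd htS hx
        · exact hcond t ht' htS

lemma exists_first_step {x t : V} (W : G.Walk x t) (hxt : x ≠ t) :
    ∃ b, G.Adj x b ∧ b ∈ W.support := by
  cases W with
  | nil => exact absurd rfl hxt
  | @cons _ b _ h q =>
    exact ⟨b, h, by rw [Walk.support_cons]; exact List.mem_cons_of_mem _ q.start_mem_support⟩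

lemma exists_ne_of_three {α : Type*} {a b c : α} (hab : a ≠ b) (hac : a ≠ c) (hbc : b ≠ c)
    (x y : α) : ∃ t, (t = a ∨ t = b ∨ t = c) ∧ t ≠ x ∧ t ≠ y := by
  by_contra hcon
  push_neg at hcon
  have ha := hcon a (Or.inl rfl)
  have hb := hcon b (Or.inr (Or.inl rfl))
  have hc := hcon c (Or.inr (Or.inr rfl))
  by_cases h1 : a = x <;> by_cases h2 : b = x <;> by_cases h3 : c = x <;> simp_all

end BlockAux

/-- A block of `G`: a maximal connected subgraph without a cut-vertex. -/
def IsBlock {V : Type*} (G : SimpleGraph V) (H : G.Subgraph) : Prop :=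
  H.Connected ∧ (∀ v ∈ H.verts, ((H.deleteVerts {v}).coe).Preconnected) ∧
    ∀ H' : G.Subgraph, H ≤ H' → H'.Connected →
      (∀ v ∈ H'.verts, ((H'.deleteVerts {v}).coe).Preconnected) → H' = H

/-- If a graph has no even cycle, then every block is an odd cycle, a single
edge, or an isolated vertex. -/
theorem block_of_no_even_cycle {V : Type*} (G : SimpleGraph V)
    (hno : ¬ ∃ (w : V) (c : G.Walk w w), c.IsCycle ∧ Even c.length)
    (H : G.Subgraph) (hH : IsBlock G H) :
    (∃ v, H.verts = {v} ∧ H.edgeSet = ∅) ∨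
    (∃ u v, u ≠ v ∧ H.verts = {u, v} ∧ H.edgeSet = {s(u, v)}) ∨
    (∃ (w : H.verts) (c : H.coe.Walk w w), c.IsCycle ∧ Odd c.length ∧
      (∀ x, x ∈ c.support) ∧ ∀ e ∈ H.coe.edgeSet, e ∈ c.edges) := by
  classical
  open SimpleGraph Subgraph in
  obtain ⟨hconn, hcut, -⟩ := hH
  have hΓconn : H.coe.Connected := hconn.coe
  have hpre : H.coe.Preconnected := hΓconn.preconnected
  obtain ⟨v0, hv0⟩ := hconn.nonempty
  by_cases h1 : ∀ x ∈ H.verts, x = v0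
  · left
    refine ⟨v0, Set.eq_singleton_iff_unique_mem.mpr ⟨hv0, h1⟩, ?_⟩
    ext e
    simp only [Set.mem_empty_iff_false, iff_false]
    induction e using Sym2.ind with
    | _ a b =>
      intro he
      rw [Subgraph.mem_edgeSet] at he
      have ha := h1 a (H.edge_vert he)
      have hb := h1 b (H.edge_vert he.symm)
      exact he.ne (ha.trans hb.symm)
  · push_neg at h1
    obtain ⟨u0, hu0, hu0v0⟩ := h1
    by_cases h2 : ∀ x ∈ H.verts, x = u0 ∨ x = v0
    · right; left
      obtain ⟨W⟩ := hpre ⟨u0, hu0⟩ ⟨v0, hv0⟩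
      obtain ⟨bb, hadjb, -⟩ := BlockAux.exists_first_step W
        (fun h => hu0v0 (congrArg Subtype.val h))
      have hbbval : (bb : V) = v0 := by
        rcases h2 (bb : V) bb.2 with h | h
        · exact absurd (Subtype.ext h.symm) hadjb.ne
        · exact h
      have hAdj : H.Adj u0 v0 := by
        have h' : H.Adj u0 (bb : V) := hadjb
        rwa [hbbval] at h'
      refine ⟨u0, v0, hu0v0, ?_, ?_⟩
      · apply Set.eq_of_subset_of_subset
        · intro x hx
          rcases h2 x hx with rfl | rfl
          · exact Set.mem_insert _ _
          · exact Set.mem_insert_of_mem _ rfl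
        · intro x hx
          rcases hx with rfl | hx
          · exact hu0
          · rw [Set.mem_singleton_iff] at hx; subst hx; exact hv0
      · ext e
        induction e using Sym2.ind with
        | _ a b =>
          rw [Set.mem_singleton_iff, Subgraph.mem_edgeSet]
          constructor
          · intro he
            have ha := h2 a (H.edge_vert he)
            have hb := h2 b (H.edge_vert he.symm)
            rcases ha with rfl | rfl <;> rcases hb with rfl | rfl
            · exact absurd rfl he.ne
            · rfl
            · rw [Sym2.eq_swap]
            · exact absurd rfl he.ne
          · intro he
            rw [Sym2.eq_iff] at he
            rcases he with ⟨rfl, rfl⟩ | ⟨rfl, rfl⟩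
            · exact hAdj
            · exact hAdj.symm
    · push_neg at h2
      obtain ⟨x3, hx3, hx3u, hx3v⟩ := h2
      right; right
      set va : H.verts := ⟨u0, hu0⟩ with hvadef
      set vb : H.verts := ⟨v0, hv0⟩ with hvbdef
      set vc : H.verts := ⟨x3, hx3⟩ with hvcdef
      have hab : va ≠ vb := fun h => hu0v0 (congrArg Subtype.val h)
      have hac : va ≠ vc := fun h => hx3u (congrArg Subtype.val h).symm
      have hbc : vb ≠ vc := fun h => hx3v (congrArg Subtype.val h).symm
      -- deleting a vertex keeps things connected
      have hdel : ∀ (v a b : H.verts), a ≠ v → b ≠ v →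
          ∃ W : H.coe.Walk a b, v ∉ W.support := by
        intro v a b hav hbv
        have hpre' := hcut (v : V) v.2
        have ha' : (a : V) ∈ (H.deleteVerts {(v : V)}).verts := by
          rw [Subgraph.deleteVerts_verts]
          exact ⟨a.2, fun hmem => hav (Subtype.ext (by simpa using hmem))⟩
        have hb' : (b : V) ∈ (H.deleteVerts {(v : V)}).verts := by
          rw [Subgraph.deleteVerts_verts]
          exact ⟨b.2, fun hmem => hbv (Subtype.ext (by simpa using hmem))⟩
        obtain ⟨W'⟩ := hpre' ⟨(a : V), ha'⟩ ⟨(b : V), hb'⟩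
        refine ⟨(W'.map (Subgraph.inclusion
          (Subgraph.deleteVerts_le : H.deleteVerts {(v : V)} ≤ H))).copy
          (Subtype.ext rfl) (Subtype.ext rfl), ?_⟩
        intro hmem
        rw [Walk.support_copy, Walk.support_map] at hmem
        obtain ⟨x', hx', heq⟩ := List.mem_map.mp hmem
        have hx'2 : (x' : V) ∈ H.verts \ {(v : V)} := x'.2
        apply hx'2.2
        rw [Set.mem_singleton_iff]
        exact congrArg Subtype.val heq
      -- all cycles in H.coe are odd
      have hodd : ∀ (a : H.verts) (d : H.coe.Walk a a), d.IsCycle → Odd d.length := by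
        intro a d hd
        rw [← Nat.not_even_iff_odd]
        intro hev
        apply hno
        refine ⟨(a : V), d.map H.hom, ?_, ?_⟩
        · exact (Walk.map_isCycle_iff_of_injective Subgraph.hom_injective).mpr hd
        · exact (congrArg Even (Walk.length_map (f := H.hom) (p := d))).mpr hev
      -- every vertex has two distinct neighbors
      have hnbr : ∀ v : H.verts, ∃ a b : H.verts, a ≠ b ∧ H.coe.Adj v a ∧ H.coe.Adj v b := by
        intro v
        obtain ⟨t, -, htv, -⟩ := BlockAux.exists_ne_of_three hab hac hbc v v
        obtain ⟨W1⟩ := hpre v t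
        obtain ⟨n1, hn1, -⟩ := BlockAux.exists_first_step W1 (Ne.symm htv)
        obtain ⟨s, -, hsv, hsn1⟩ := BlockAux.exists_ne_of_three hab hac hbc v n1
        obtain ⟨W2, hW2⟩ := hdel n1 v s hn1.ne hsn1
        obtain ⟨n2, hn2, hn2mem⟩ := BlockAux.exists_first_step W2 (Ne.symm hsv)
        exact ⟨n2, n1, fun h => hW2 (h ▸ hn2mem), hn2, hn1⟩
      -- construct a cycle
      obtain ⟨a1, b1, hab1, hva1, hvb1⟩ := hnbr va
      obtain ⟨W0, hW0⟩ := hdel va a1 b1 hva1.ne' hvb1.ne'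
      have hP0path : W0.bypass.IsPath := W0.bypass_isPath
      have hvaP0 : va ∉ W0.bypass.support := fun h => hW0 (W0.support_bypass_subset h)
      set C : H.coe.Walk va va := Walk.cons hva1 (W0.bypass.concat hvb1.symm) with hCdef
      have hQpath : (W0.bypass.concat hvb1.symm).IsPath := by
        apply Walk.IsPath.mk'
        rw [Walk.support_concat, List.nodup_append]
        refine ⟨hP0path.support_nodup, List.nodup_singleton _, ?_⟩
        intro t ht t' ht2 heq
        rw [List.mem_singleton] at ht2
        exact hvaP0 (by rw [← ht2, ← heq]; exact ht)
      have hCcyc : C.IsCycle := by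
        rw [hCdef, Walk.cons_isCycle_iff]
        refine ⟨hQpath, ?_⟩
        intro hmem
        rw [Walk.edges_concat, List.concat_eq_append, List.mem_append] at hmem
        rcases hmem with hmem | hmem
        · exact hvaP0 (Walk.fst_mem_support_of_mem_edges _ hmem)
        · rw [List.mem_singleton, Sym2.eq_iff] at hmem
          rcases hmem with ⟨h1, -⟩ | ⟨-, h2⟩
          · exact hvb1.ne h1
          · exact hab1 h2
      -- the cycle is spanning
      have hCne : ∀ x : H.verts, x ∈ C.support := by
        by_contra hcon
        push_neg at hcon
        obtain ⟨x, hx⟩ := hcon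
        obtain ⟨W1⟩ := hpre x va
        obtain ⟨y, P1, hyS, hP1, -, hP1cond⟩ :=
          BlockAux.exists_path_until (S := {t | t ∈ C.support}) W1 hx C.start_mem_support
        have hxy : x ≠ y := fun h => hx (h ▸ hyS)
        obtain ⟨w2, hw2C, hw2y⟩ : ∃ w2, w2 ∈ C.support ∧ w2 ≠ y := by
          by_contra hcon2
          push_neg at hcon2
          have h3 := hCcyc.three_le_length
          have hls := C.length_support
          have hrep : C.support.tail = List.replicate C.support.tail.length y :=
            List.eq_replicate_of_mem (fun b hb => hcon2 b (List.mem_of_mem_tail hb))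
          have hnd := hCcyc.support_nodup
          rw [hrep] at hnd
          have hle := List.nodup_replicate.mp hnd
          have hlt : C.support.tail.length = C.support.length - 1 := List.length_tail
          omega
        obtain ⟨W2, hW2⟩ := hdel y x w2 hxy hw2y
        obtain ⟨z, P2, hzS, hP2, hP2sub, hP2cond⟩ :=
          BlockAux.exists_path_until (S := {t | t ∈ C.support}) W2 hx hw2C
        have hyz : y ≠ z := by
          intro h
          subst h
          exact hW2 (hP2sub y P2.end_mem_support)
        set R := (P1.reverse.append P2).bypass with hRdef
        have hRpath : R.IsPath := Walk.bypass_isPath _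
        have hRsup : ∀ t, t ∈ R.support → t ∈ C.support → t = y ∨ t = z := by
          intro t ht htC
          have ht' := Walk.support_bypass_subset _ ht
          rw [Walk.mem_support_append_iff] at ht'
          rcases ht' with ht' | ht'
          · rw [Walk.support_reverse, List.mem_reverse] at ht'
            exact Or.inl (hP1cond t ht' htC)
          · exact Or.inr (hP2cond t ht' htC)
        have hRnoedge : s(y, z) ∉ R.edges := by
          intro he
          have he' := Walk.edges_bypass_subset _ he
          rw [Walk.edges_append, List.mem_append, Walk.edges_reverse, List.mem_reverse] at he'
          rcases he' with he' | he'
          · have hz' : z ∈ P1.support := Walk.snd_mem_support_of_mem_edges P1 he'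
            exact hyz (hP1cond z hz' hzS).symm
          · have hy' : y ∈ P2.support := Walk.fst_mem_support_of_mem_edges P2 he'
            exact hyz (hP2cond y hy' hyS)
        have hR2 : 2 ≤ R.length := by
          have h0 : R.length ≠ 0 := fun h0 => hyz (Walk.eq_of_length_eq_zero h0)
          have h1 : R.length ≠ 1 := fun h1 => hRnoedge (BlockAux.edge_mem_of_length_one R h1)
          omega
        obtain ⟨A, B, hA, hB, hsum, hAsub, hBsub, -, -, -⟩ :=
          BlockAux.split_cycle hCcyc hyS hzS hyz
        have hA1 : 1 ≤ A.length := by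
          rcases Nat.eq_zero_or_pos A.length with h | h
          · exact absurd (Walk.eq_of_length_eq_zero h) hyz
          · exact h
        have hB1 : 1 ≤ B.length := by
          rcases Nat.eq_zero_or_pos B.length with h | h
          · exact absurd (Walk.eq_of_length_eq_zero h).symm hyz
          · exact h
        have hc1 : (A.append R.reverse).IsCycle :=
          BlockAux.cycle_of_two_paths hA hRpath hyz (by omega)
            (fun t htA htR => hRsup t htR (hAsub t htA))
        have hc2 : (B.reverse.append R.reverse).IsCycle :=
          BlockAux.cycle_of_two_paths hB.reverse hRpath hyz
            (by rw [Walk.length_reverse]; omega)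
            (fun t htB htR => hRsup t htR
              (hBsub t (by rwa [Walk.support_reverse, List.mem_reverse] at htB)))
        have ho1 := hodd y _ hc1
        have ho2 := hodd y _ hc2
        have hoC := hodd va C hCcyc
        rw [Nat.odd_iff] at ho1 ho2 hoC
        simp only [Walk.length_append, Walk.length_reverse] at ho1 ho2
        omega
      -- every edge lies on the cycle
      have hedge : ∀ (a b : H.verts), H.coe.Adj a b → s(a, b) ∈ C.edges := by
        intro a b hadj
        by_contra hne
        have hab' : a ≠ b := hadj.ne
        obtain ⟨A, B, hA, hB, hsum, -, -, -, hAe, hBe⟩ :=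
          BlockAux.split_cycle hCcyc (hCne a) (hCne b) hab'
        have hA2 : 2 ≤ A.length := by
          have h0 : A.length ≠ 0 := fun h0 => hab' (Walk.eq_of_length_eq_zero h0)
          have h1 : A.length ≠ 1 := fun h1 =>
            hne (hAe _ (BlockAux.edge_mem_of_length_one A h1))
          omega
        have hB2 : 2 ≤ B.length := by
          have h0 : B.length ≠ 0 := fun h0 => hab' (Walk.eq_of_length_eq_zero h0).symm
          have h1 : B.length ≠ 1 := by
            intro h1
            apply hne
            have h' := hBe _ (BlockAux.edge_mem_of_length_one B h1)
            rwa [Sym2.eq_swap] at h'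
          omega
        set R : H.coe.Walk a b := Walk.cons hadj Walk.nil with hRdef
        have hRpath : R.IsPath := by
          rw [hRdef, Walk.cons_isPath_iff]
          exact ⟨Walk.IsPath.nil, by simp [hadj.ne]⟩
        have hRsupport : ∀ t, t ∈ R.support → t = a ∨ t = b := by
          intro t ht
          rw [hRdef] at ht
          simpa using ht
        have hRlen : R.length = 1 := by rw [hRdef]; simp
        have hc1 : (A.append R.reverse).IsCycle :=
          BlockAux.cycle_of_two_paths hA hRpath hab' (by omega)
            (fun t _ htR => hRsupport t htR)
        have hc2 : (B.reverse.append R.reverse).IsCycle :=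
          BlockAux.cycle_of_two_paths hB.reverse hRpath hab'
            (by rw [Walk.length_reverse]; omega)
            (fun t _ htR => hRsupport t htR)
        have ho1 := hodd a _ hc1
        have ho2 := hodd a _ hc2
        have hoC := hodd va C hCcyc
        rw [Nat.odd_iff] at ho1 ho2 hoC
        simp only [Walk.length_append, Walk.length_reverse] at ho1 ho2
        omega
      refine ⟨va, C, hCcyc, hodd va C hCcyc, hCne, ?_⟩
      intro e
      induction e using Sym2.ind with
      | _ a b => exact fun he => hedge a b he
end

section
/- Let C be a shortest odd cycle in a graph G, and let t be a vertex not on C with at least two neighbors on C. Then there exist two neighbors vᵢ, vⱼ of t on C such that the arc of C from vᵢ to vⱼ not containing any other neighbor of t on that side is odd, and minimality of C forces the complementary even arc to have length exactly 2. -/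
open SimpleGraph

namespace ShortestOddCycleAux

variable {V : Type*} {G : SimpleGraph V}

lemma end_mem_tail_support {u w : V} (p : G.Walk u w) (h : p.length ≠ 0) :
    w ∈ p.support.tail := by
  cases p with
  | nil => simp at h
  | cons h' q => simp [Walk.support_cons, q.end_mem_support]

lemma isCycle_append_comm {u w : V} {A : G.Walk u w} {B : G.Walk w u}
    (h : (A.append B).IsCycle) : (B.append A).IsCycle := by
  rw [Walk.isCycle_def, Walk.isTrail_def] at h ⊢
  obtain ⟨he, hn, hs⟩ := h
  rw [Walk.edges_append] at he ⊢
  rw [Walk.tail_support_append] at hs ⊢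
  refine ⟨List.nodup_append_comm.mp he, ?_, List.nodup_append_comm.mp hs⟩
  intro hnil
  have h0 := congrArg Walk.length hnil
  rw [Walk.length_append] at h0
  simp only [Walk.length_nil] at h0
  apply hn
  apply Walk.Nil.eq_nil
  rw [Walk.nil_iff_length_eq, Walk.length_append]
  omega

lemma isPath_left_of_isCycle_append {u w : V} {A : G.Walk u w} {B : G.Walk w u}
    (h : (A.append B).IsCycle) (hB : B.length ≠ 0) : A.IsPath := by
  have he : A.edges.Nodup := by
    have h1 := h.edges_nodup
    rw [Walk.edges_append, List.nodup_append] at h1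
    exact h1.1
  have hs := h.support_nodup
  rw [Walk.tail_support_append, List.nodup_append] at hs
  obtain ⟨hA, hB', hdisj⟩ := hs
  rw [Walk.isPath_def, Walk.support_eq_cons, List.nodup_cons]
  exact ⟨fun hu => hdisj _ hu _ (end_mem_tail_support B hB) rfl, hA⟩

/-- Key inductive step: shrink an odd arc between neighbors of `t` until it has
no interior neighbor of `t`. -/
lemma aux {v t : V} (c : G.Walk v v) :
    ∀ n : ℕ, ∀ (p q : V) (P : G.Walk p q) (Q : G.Walk q p),
      P.length ≤ n → p ≠ q → G.Adj t p → G.Adj t q → (P.append Q).IsCycle →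
      Odd P.length →
      (∀ e ∈ P.edges, e ∈ c.edges) → (∀ e ∈ Q.edges, e ∈ c.edges) →
      (∀ x ∈ P.support, x ∈ c.support) → (∀ x ∈ Q.support, x ∈ c.support) →
      t ∉ P.support → t ∉ Q.support →
      ∃ (p' q' : V), p' ≠ q' ∧ p' ∈ c.support ∧ q' ∈ c.support ∧
        G.Adj t p' ∧ G.Adj t q' ∧
        ∃ (P' : G.Walk p' q') (Q' : G.Walk q' p'),
        P'.IsPath ∧ Q'.IsPath ∧ (∀ e ∈ P'.edges, e ∈ c.edges) ∧
        (∀ e ∈ Q'.edges, e ∈ c.edges) ∧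
        P'.length + Q'.length = P.length + Q.length ∧ Odd P'.length ∧
        (∀ x ∈ P'.support, x ≠ p' → x ≠ q' → ¬ G.Adj t x) ∧ t ∉ P'.support := by
  intro n
  induction n with
  | zero =>
    intro p q P Q hlen _ _ _ _ hoddP _ _ _ _ _ _
    rw [Nat.odd_iff] at hoddP
    omega
  | succ n ih =>
    intro p q P Q hlen hne hap haq hcyc hoddP heP heQ hsP hsQ htP htQ
    classical
    by_cases hz : ∃ z ∈ P.support, z ≠ p ∧ z ≠ q ∧ G.Adj t z
    · obtain ⟨z, hzs, hzp, hzq, haz⟩ := hz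
      have hspec : (P.takeUntil z hzs).append (P.dropUntil z hzs) = P := P.take_spec hzs
      set P1 := P.takeUntil z hzs with hP1
      set P2 := P.dropUntil z hzs with hP2
      have hlen12 : P1.length + P2.length = P.length := by
        have h0 := congrArg Walk.length hspec
        rwa [Walk.length_append] at h0
      have h1pos : 0 < P1.length := by
        rcases Nat.eq_zero_or_pos P1.length with h | h
        · exact absurd (Walk.eq_of_length_eq_zero h).symm hzp
        · exact h
      have h2pos : 0 < P2.length := by
        rcases Nat.eq_zero_or_pos P2.length with h | h
        · exact absurd (Walk.eq_of_length_eq_zero h) hzq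
        · exact h
      have hcyc' : (P1.append (P2.append Q)).IsCycle := by
        rw [Walk.append_assoc, hspec]; exact hcyc
      have heP1 : ∀ e ∈ P1.edges, e ∈ c.edges := fun e he =>
        heP e (P.edges_takeUntil_subset hzs he)
      have heP2 : ∀ e ∈ P2.edges, e ∈ c.edges := fun e he =>
        heP e (P.edges_dropUntil_subset hzs he)
      have hsP1 : ∀ x ∈ P1.support, x ∈ c.support := fun x hx =>
        hsP x (P.support_takeUntil_subset hzs hx)
      have hsP2 : ∀ x ∈ P2.support, x ∈ c.support := fun x hx =>
        hsP x (P.support_dropUntil_subset hzs hx)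
      have htP1 : t ∉ P1.support := fun hx => htP (P.support_takeUntil_subset hzs hx)
      have htP2 : t ∉ P2.support := fun hx => htP (P.support_dropUntil_subset hzs hx)
      have hoddP' := hoddP
      rw [Nat.odd_iff] at hoddP'
      rcases Nat.even_or_odd P1.length with hev | hod
      · -- P2 is odd
        have hodd2 : Odd P2.length := by
          rw [Nat.even_iff] at hev
          rw [Nat.odd_iff]
          omega
        have hcyc'' : (P2.append (Q.append P1)).IsCycle := by
          rw [Walk.append_assoc]
          exact isCycle_append_comm hcyc'
        obtain ⟨p', q', h1, h2, h3, h4, h5, P', Q', h6, h7, h8, h9, h10, h11, h12, h13⟩ :=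
          ih z q P2 (Q.append P1) (by omega) hzq haz haq hcyc'' hodd2 heP2
            (by
              intro e he
              rw [Walk.edges_append, List.mem_append] at he
              exact he.elim (heQ e) (heP1 e))
            hsP2
            (by
              intro x hx
              rw [Walk.mem_support_append_iff] at hx
              exact hx.elim (hsQ x) (hsP1 x))
            htP2
            (by
              rw [Walk.mem_support_append_iff]
              exact fun h => h.elim htQ htP1)
        refine ⟨p', q', h1, h2, h3, h4, h5, P', Q', h6, h7, h8, h9, ?_, h11, h12, h13⟩
        rw [Walk.length_append] at h10
        omega
      · -- P1 is odd
        obtain ⟨p', q', h1, h2, h3, h4, h5, P', Q', h6, h7, h8, h9, h10, h11, h12, h13⟩ :=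
          ih p z P1 (P2.append Q) (by omega) (fun h => hzp h.symm) hap haz hcyc' hod heP1
            (by
              intro e he
              rw [Walk.edges_append, List.mem_append] at he
              exact he.elim (heP2 e) (heQ e))
            hsP1
            (by
              intro x hx
              rw [Walk.mem_support_append_iff] at hx
              exact hx.elim (hsP2 x) (hsQ x))
            htP1
            (by
              rw [Walk.mem_support_append_iff]
              exact fun h => h.elim htP2 htQ)
        refine ⟨p', q', h1, h2, h3, h4, h5, P', Q', h6, h7, h8, h9, ?_, h11, h12, h13⟩
        rw [Walk.length_append] at h10
        omega
    · push_neg at hz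
      have hQ0 : Q.length ≠ 0 := fun h => hne (Walk.eq_of_length_eq_zero h).symm
      have hP0 : P.length ≠ 0 := by
        rw [Nat.odd_iff] at hoddP
        omega
      refine ⟨p, q, hne, hsP p P.start_mem_support, hsP q P.end_mem_support, hap, haq,
        P, Q, isPath_left_of_isCycle_append hcyc hQ0,
        isPath_left_of_isCycle_append (isCycle_append_comm hcyc) hP0,
        heP, heQ, rfl, hoddP, ?_, htP⟩
      intro x hx hxp hxq hadj
      exact (hz x hx hxp hxq) hadj

end ShortestOddCycleAux

/-- For a shortest odd cycle `C` and a vertex `t ∉ C` with at least two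
neighbors on `C`, there are neighbors `p, q` of `t` on `C` such that the arc
of `C` from `p` to `q` containing no other neighbor of `t` is odd, and the
complementary even arc has length exactly 2. -/
theorem shortest_odd_cycle_neighbor_arcs {V : Type*} (G : SimpleGraph V) (v : V)
    (c : G.Walk v v) (hc : c.IsCycle) (hodd : Odd c.length)
    (hmin : ∀ (w : V) (c' : G.Walk w w), c'.IsCycle → Odd c'.length → c.length ≤ c'.length)
    (t : V) (ht : t ∉ c.support)
    (hnb : ∃ x y, x ≠ y ∧ x ∈ c.support ∧ y ∈ c.support ∧ G.Adj t x ∧ G.Adj t y) :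
    ∃ p q : V, p ≠ q ∧ p ∈ c.support ∧ q ∈ c.support ∧ G.Adj t p ∧ G.Adj t q ∧
      ∃ (P : G.Walk p q) (Q : G.Walk q p), P.IsPath ∧ Q.IsPath ∧
        (∀ e ∈ P.edges, e ∈ c.edges) ∧ (∀ e ∈ Q.edges, e ∈ c.edges) ∧
        P.length + Q.length = c.length ∧
        Odd P.length ∧ (∀ x ∈ P.support, x ≠ p → x ≠ q → ¬ G.Adj t x) ∧
        Even Q.length ∧ Q.length = 2 := by
  classical
  obtain ⟨x, y, hxy, hxc, hyc, hax, hay⟩ := hnb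
  set c1 := c.rotate x hxc with hc1def
  have hc1 : c1.IsCycle := hc.rotate hxc
  have hrot := Walk.rotate_edges c x hxc
  have hlen1 : c1.length = c.length := by
    have h0 := hrot.perm.length_eq
    rwa [Walk.length_edges, Walk.length_edges] at h0
  have hCpos : c.length ≠ 0 := by
    have := hc.three_le_length; omega
  have hc1pos : c1.length ≠ 0 := by omega
  -- support membership transfers
  have hsup : ∀ z, z ∈ c1.support ↔ z ∈ c.support := by
    intro z
    have hrs := Walk.support_rotate c x hxc
    constructor
    · intro h
      rw [Walk.mem_support_iff] at h
      rcases h with rfl | h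
      · exact hxc
      · rw [Walk.mem_support_iff]
        exact Or.inr (hrs.mem_iff.mp h)
    · intro h
      have h' : z ∈ c.support.tail := by
        rw [Walk.mem_support_iff] at h
        rcases h with rfl | h
        · exact ShortestOddCycleAux.end_mem_tail_support c hCpos
        · exact h
      rw [Walk.mem_support_iff]
      exact Or.inr (hrs.mem_iff.mpr h')
  have hmeme : ∀ e ∈ c1.edges, e ∈ c.edges := fun e he => hrot.mem_iff.mp he
  have hy1 : y ∈ c1.support := (hsup y).mpr hyc
  have ht1 : t ∉ c1.support := fun h => ht ((hsup t).mp h)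
  have hspec : (c1.takeUntil y hy1).append (c1.dropUntil y hy1) = c1 := c1.take_spec hy1
  set P0 := c1.takeUntil y hy1 with hP0
  set Q0 := c1.dropUntil y hy1 with hQ0
  have hlen0 : P0.length + Q0.length = c.length := by
    have h0 := congrArg Walk.length hspec
    rw [Walk.length_append] at h0
    omega
  have hcyc0 : (P0.append Q0).IsCycle := by rw [hspec]; exact hc1
  have heP0 : ∀ e ∈ P0.edges, e ∈ c.edges := fun e he =>
    hmeme e (c1.edges_takeUntil_subset hy1 he)
  have heQ0 : ∀ e ∈ Q0.edges, e ∈ c.edges := fun e he =>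
    hmeme e (c1.edges_dropUntil_subset hy1 he)
  have hsP0 : ∀ z ∈ P0.support, z ∈ c.support := fun z hz =>
    (hsup z).mp (c1.support_takeUntil_subset hy1 hz)
  have hsQ0 : ∀ z ∈ Q0.support, z ∈ c.support := fun z hz =>
    (hsup z).mp (c1.support_dropUntil_subset hy1 hz)
  have htP0 : t ∉ P0.support := fun h => ht1 (c1.support_takeUntil_subset hy1 h)
  have htQ0 : t ∉ Q0.support := fun h => ht1 (c1.support_dropUntil_subset hy1 h)
  have hoddc := hodd
  rw [Nat.odd_iff] at hoddc
  -- apply aux with whichever arc is odd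
  have key : ∃ (p q : V), p ≠ q ∧ p ∈ c.support ∧ q ∈ c.support ∧
      G.Adj t p ∧ G.Adj t q ∧
      ∃ (P : G.Walk p q) (Q : G.Walk q p),
      P.IsPath ∧ Q.IsPath ∧ (∀ e ∈ P.edges, e ∈ c.edges) ∧
      (∀ e ∈ Q.edges, e ∈ c.edges) ∧
      P.length + Q.length = c.length ∧ Odd P.length ∧
      (∀ z ∈ P.support, z ≠ p → z ≠ q → ¬ G.Adj t z) ∧ t ∉ P.support := by
    rcases Nat.even_or_odd P0.length with hev | hod
    · have hodQ : Odd Q0.length := by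
        rw [Nat.even_iff] at hev; rw [Nat.odd_iff]; omega
      obtain ⟨p, q, h1, h2, h3, h4, h5, P, Q, h6, h7, h8, h9, h10, h11, h12, h13⟩ :=
        ShortestOddCycleAux.aux c Q0.length y x Q0 P0 le_rfl hxy.symm hay hax
          (ShortestOddCycleAux.isCycle_append_comm hcyc0) hodQ heQ0 heP0 hsQ0 hsP0 htQ0 htP0
      exact ⟨p, q, h1, h2, h3, h4, h5, P, Q, h6, h7, h8, h9, by omega, h11, h12, h13⟩
    · obtain ⟨p, q, h1, h2, h3, h4, h5, P, Q, h6, h7, h8, h9, h10, h11, h12, h13⟩ :=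
        ShortestOddCycleAux.aux c P0.length x y P0 Q0 le_rfl hxy hax hay
          hcyc0 hod heP0 heQ0 hsP0 hsQ0 htP0 htQ0
      exact ⟨p, q, h1, h2, h3, h4, h5, P, Q, h6, h7, h8, h9, by omega, h11, h12, h13⟩
  obtain ⟨p, q, h1, h2, h3, h4, h5, P, Q, h6, h7, h8, h9, h10, h11, h12, h13⟩ := key
  -- final step: use minimality on the cycle t - P - t
  have hQ0' : Q.length ≠ 0 := fun h => h1 (Walk.eq_of_length_eq_zero h).symm
  have hQeven : Even Q.length := by
    rw [Nat.even_iff]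
    have h11' := h11
    rw [Nat.odd_iff] at h11'
    omega
  -- build the cycle through t
  have hD : (Walk.cons h4 (P.concat h5.symm)).IsCycle := by
    have hPt : t ∉ P.support := h13
    have hPnodup : P.support.Nodup := h6.support_nodup
    have hPedges : P.edges.Nodup := h6.edges_nodup
    rw [Walk.isCycle_def]
    refine ⟨?_, by simp, ?_⟩
    · rw [Walk.isTrail_def, Walk.edges_cons, Walk.edges_concat, List.concat_eq_append,
        List.nodup_cons]
      constructor
      · rw [List.mem_append, List.mem_singleton]
        rintro (h | h)
        · exact hPt (P.fst_mem_support_of_mem_edges h)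
        · rw [Sym2.eq_iff] at h
          rcases h with ⟨-, rfl⟩ | ⟨-, rfl⟩
          · exact G.irrefl h4
          · exact h1 rfl
      · rw [List.nodup_append]
        refine ⟨hPedges, List.nodup_singleton _, ?_⟩
        rintro e he e' he' rfl
        rw [List.mem_singleton] at he'
        subst he'
        exact hPt (P.snd_mem_support_of_mem_edges he)
    · rw [Walk.support_cons, List.tail_cons, Walk.support_concat,
        List.nodup_append]
      exact ⟨hPnodup, List.nodup_singleton _, by
        rintro z hz z' hz' rfl
        rw [List.mem_singleton] at hz'
        subst hz'
        exact hPt hz⟩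
  have hDlen : (Walk.cons h4 (P.concat h5.symm)).length = P.length + 2 := by
    rw [Walk.length_cons, Walk.length_concat]
  have hDodd : Odd (Walk.cons h4 (P.concat h5.symm)).length := by
    rw [hDlen]
    rcases h11 with ⟨k, hk⟩
    exact ⟨k + 1, by omega⟩
  have hmin' := hmin t _ hD hDodd
  rw [hDlen] at hmin'
  have hQ2 : Q.length = 2 := by
    rw [Nat.even_iff] at hQeven
    omega
  exact ⟨p, q, h1, h2, h3, h4, h5, P, Q, h6, h7, h8, h9, h10, h11, h12, hQeven, hQ2⟩
end
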